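/- For every s-adic unique point x₀ and every ε > 0 there is δ > 0 such that |f(x) − f(x₀)| ≤ 2^{-(m−1)} whenever the s-adic expansions of x and x₀ agree in the first m−1 digits; consequently f is continuous at every point with a unique s-adic expansion. -/

import Mathlib

open Set Filter

/-- Value of an `s`-adic code `α`: `∑ αₙ / sⁿ⁺¹`. -/
noncomputable def sval (s : ℕ) (α : ℕ → ℕ) : ℝ := ∑' n, (α n : ℝ) / (s : ℝ) ^ (n + 1)

/-- `α` is a sequence of digits in `{0, …, s−1}`. -/
def isDigits (s : ℕ) (α : ℕ → ℕ) : Prop := ∀ n, α n < s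

/-- The `s`-adic cylinder of rank `m` with base `c₀ … c_{m−1}`. -/
def cylinder (s m : ℕ) (c : ℕ → ℕ) : Set ℝ :=
  {x | ∃ α : ℕ → ℕ, isDigits s α ∧ (∀ i < m, α i = c i) ∧ x = sval s α}

/-- The sequence of output binary digits `βₙ`. -/
def betaSeq (A1 : Finset ℕ) (α : ℕ → ℕ) : ℕ → ℕ
  | 0 => if α 0 ∈ A1 then 1 else 0
  | n + 1 => if α (n + 1) = α n then betaSeq A1 α n else 1 - betaSeq A1 α n


noncomputable def pval (s k : ℕ) (α : ℕ → ℕ) : ℝ :=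
  ∑ i ∈ Finset.range k, (α i : ℝ) / (s:ℝ) ^ (i+1)

lemma tail_term_eq {s : ℕ} (hs : 1 < s) (k n : ℕ) :
    ((s:ℝ) - 1) / (s:ℝ) ^ (n + k + 1) = (((s:ℝ)-1) / (s:ℝ)^(k+1)) * ((1:ℝ)/s)^n := by
  have h0 : (s:ℝ) ≠ 0 := by positivity
  rw [div_pow, one_pow, div_mul_div_comm, mul_one, ← pow_add]
  ring_nf

lemma digit_le {s : ℕ} (a : ℕ) (h : a < s) : (a : ℝ) ≤ (s:ℝ) - 1 := by
  have : (a:ℝ) + 1 ≤ (s:ℝ) := by exact_mod_cast h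
  linarith

lemma summable_tail {s : ℕ} (hs : 1 < s) (k : ℕ) :
    Summable (fun n => ((s:ℝ) - 1) / (s:ℝ) ^ (n + k + 1)) := by
  have hs1 : (1:ℝ) < (s:ℝ) := by exact_mod_cast hs
  have h0 : (0:ℝ) < s := by linarith
  apply Summable.congr (f := fun n => (((s:ℝ)-1) / (s:ℝ)^(k+1)) * ((1:ℝ)/s)^n)
  · exact (summable_geometric_of_lt_one (by positivity)
      (by rw [div_lt_one h0]; linarith)).mul_left _
  · intro n; rw [tail_term_eq hs]

lemma summable_digits {s : ℕ} (hs : 1 < s) (α : ℕ → ℕ) (hα : isDigits s α) :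
    Summable (fun n => (α n : ℝ) / (s : ℝ) ^ (n + 1)) := by
  have hs1 : (1:ℝ) < (s:ℝ) := by exact_mod_cast hs
  have hb : ∀ n, (α n : ℝ)/(s:ℝ)^(n+1) ≤ ((s:ℝ)-1)/(s:ℝ)^(n+0+1) := by
    intro n
    simp only [add_zero]
    exact div_le_div_of_nonneg_right (digit_le _ (hα n)) (by positivity)
  exact Summable.of_nonneg_of_le (fun n => by positivity) hb (summable_tail hs 0)

lemma geom_tail {s : ℕ} (hs : 1 < s) (k : ℕ) :
    ∑' n : ℕ, ((s:ℝ) - 1) / (s:ℝ) ^ (n + k + 1) = ((1:ℝ)/s) ^ k := by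
  have hs1 : (1:ℝ) < (s:ℝ) := by exact_mod_cast hs
  have h0 : (0:ℝ) < s := by linarith
  have h0' : (s:ℝ) ≠ 0 := by positivity
  have hr : (1:ℝ)/s < 1 := by rw [div_lt_one h0]; linarith
  rw [tsum_congr (fun n => tail_term_eq hs k n), tsum_mul_left,
    tsum_geometric_of_lt_one (by positivity) hr]
  have h1 : (s:ℝ) - 1 ≠ 0 := by intro h; linarith [hs1]
  have h2 : (1:ℝ) - 1/s = ((s:ℝ)-1)/s := by field_simp
  rw [h2, inv_div, div_mul_div_comm, div_pow, one_pow,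
    div_eq_div_iff (by positivity) (by positivity)]
  ring

lemma sval_split {s : ℕ} (hs : 1 < s) (α : ℕ → ℕ) (hα : isDigits s α) (k : ℕ) :
    sval s α = pval s k α + ∑' n, (α (n + k) : ℝ) / (s:ℝ) ^ (n + k + 1) := by
  have := (Summable.sum_add_tsum_nat_add (f := fun n => (α n : ℝ) / (s:ℝ) ^ (n + 1)) k
    (summable_digits hs α hα)).symm
  simpa [sval, pval] using this

lemma pval_le_sval {s : ℕ} (hs : 1 < s) (α : ℕ → ℕ) (hα : isDigits s α) (k : ℕ) :
    pval s k α ≤ sval s α := by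
  rw [sval_split hs α hα k]
  have : 0 ≤ ∑' n, (α (n + k) : ℝ) / (s:ℝ) ^ (n + k + 1) := by
    apply tsum_nonneg; intro n; positivity
  linarith

lemma sval_le_pval {s : ℕ} (hs : 1 < s) (α : ℕ → ℕ) (hα : isDigits s α) (k : ℕ) :
    sval s α ≤ pval s k α + ((1:ℝ)/s) ^ k := by
  have hs1 : (1:ℝ) < (s:ℝ) := by exact_mod_cast hs
  rw [sval_split hs α hα k]
  have hle : ∑' n, (α (n + k) : ℝ) / (s:ℝ) ^ (n + k + 1)
      ≤ ∑' n : ℕ, ((s:ℝ) - 1) / (s:ℝ) ^ (n + k + 1) := by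
    apply Summable.tsum_le_tsum
    · intro n
      exact div_le_div_of_nonneg_right (digit_le _ (hα (n+k))) (by positivity)
    · exact ((summable_digits hs α hα).comp_injective (add_left_injective k)).congr
        (by intro n; simp [Function.comp])
    · exact summable_tail hs k
  rw [geom_tail hs k] at hle
  linarith

lemma sval_close {s : ℕ} (hs : 1 < s) {α β : ℕ → ℕ} (hα : isDigits s α) (hβ : isDigits s β)
    (k : ℕ) (h : ∀ i < k, α i = β i) : |sval s α - sval s β| ≤ ((1:ℝ)/s) ^ k := by
  have hp : pval s k α = pval s k β := by
    unfold pval; apply Finset.sum_congr rfl; intro i hi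
    rw [h i (Finset.mem_range.1 hi)]
  have h1 := pval_le_sval hs α hα k
  have h2 := sval_le_pval hs α hα k
  have h3 := pval_le_sval hs β hβ k
  have h4 := sval_le_pval hs β hβ k
  rw [abs_le]; constructor <;> linarith


lemma betaSeq_lt_two (A1 : Finset ℕ) (α : ℕ → ℕ) : isDigits 2 (betaSeq A1 α) := by
  intro n
  induction n with
  | zero => simp [betaSeq]; split <;> norm_num
  | succ n ih => simp only [betaSeq]; split <;> omega

lemma betaSeq_congr (A1 : Finset ℕ) {α β : ℕ → ℕ} (n : ℕ) (h : ∀ i ≤ n, α i = β i) :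
    betaSeq A1 α n = betaSeq A1 β n := by
  induction n with
  | zero => simp [betaSeq, h 0 le_rfl]
  | succ n ih =>
      have hn : ∀ i ≤ n, α i = β i := fun i hi => h i (hi.trans (Nat.le_succ n))
      simp only [betaSeq, h (n+1) le_rfl, h n (Nat.le_succ n), ih hn]

lemma part1 {s : ℕ} (hs : 2 < s) (A1 : Finset ℕ) {α c : ℕ → ℕ}
    (hα : isDigits s α) (hc : isDigits s c) (m : ℕ)
    (h : ∀ i < m, α i = c i) :
    |sval 2 (betaSeq A1 α) - sval 2 (betaSeq A1 c)| ≤ ((1:ℝ)/2) ^ m := by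
  have h2 : (1:ℕ) < 2 := one_lt_two
  apply sval_close h2 (betaSeq_lt_two A1 α) (betaSeq_lt_two A1 c) m
  intro i hi
  exact betaSeq_congr A1 i (fun j hj => h j (lt_of_le_of_lt hj hi))

lemma exists_expansion {s : ℕ} (hs : 1 < s) {x : ℝ} (hx : x ∈ Set.Icc (0:ℝ) 1) :
    ∃ α : ℕ → ℕ, isDigits s α ∧ sval s α = x := by
  have hs1 : (1:ℝ) < (s:ℝ) := by exact_mod_cast hs
  have hsp : (0:ℝ) < (s:ℝ) := by linarith
  obtain ⟨hx0, hx1⟩ := hx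
  rcases eq_or_lt_of_le hx1 with h1 | h1
  · -- x = 1
    refine ⟨fun _ => s - 1, fun n => by show s - 1 < s; omega, ?_⟩
    have : sval s (fun _ => s - 1) = ∑' n : ℕ, ((s:ℝ) - 1) / (s:ℝ) ^ (n + 0 + 1) := by
      unfold sval
      apply tsum_congr; intro n
      have : ((s - 1 : ℕ) : ℝ) = (s:ℝ) - 1 := by
        have : 1 ≤ s := le_of_lt hs
        push_cast [this]; ring
      rw [this, add_zero]
    rw [this, geom_tail hs 0, pow_zero, ← h1]
  · -- x < 1
    set a : ℕ → ℤ := fun n => ⌊x * (s:ℝ)^n⌋ with ha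
    have ha0 : a 0 = 0 := by
      simp [ha, Int.floor_eq_zero_iff, hx0, h1]
    have key : ∀ n, (s:ℤ) * a n ≤ a (n+1) ∧ a (n+1) < (s:ℤ) * a n + s := by
      intro n
      constructor
      · rw [Int.le_floor]
        push_cast
        have := Int.floor_le (x * (s:ℝ)^n)
        calc (s:ℝ) * a n ≤ (s:ℝ) * (x * (s:ℝ)^n) := by
              apply mul_le_mul_of_nonneg_left this (le_of_lt hsp)
          _ = x * (s:ℝ)^(n+1) := by ring
      · rw [Int.floor_lt]
        push_cast
        have := Int.lt_floor_add_one (x * (s:ℝ)^n)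
        calc x * (s:ℝ)^(n+1) = (s:ℝ) * (x * (s:ℝ)^n) := by ring
          _ < (s:ℝ) * ((a n : ℝ) + 1) := by
              apply mul_lt_mul_of_pos_left this hsp
          _ = (s:ℝ) * (a n : ℝ) + s := by ring
    set α : ℕ → ℕ := fun n => (a (n+1) - s * a n).toNat with hα
    have hd : isDigits s α := by
      intro n
      have := key n
      simp only [hα]
      omega
    have hcast : ∀ n, (α n : ℝ) = (a (n+1) : ℝ) - (s:ℝ) * (a n : ℝ) := by
      intro n
      have h := key n
      have : ((a (n+1) - s * a n).toNat : ℤ) = a (n+1) - s * a n := by omega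
      simp only [hα]
      exact_mod_cast congrArg (Int.cast : ℤ → ℝ) this
    have hpval : ∀ k, pval s k α = (a k : ℝ) / (s:ℝ)^k := by
      intro k
      induction k with
      | zero => simp [pval, ha0]
      | succ k ih =>
          have hk : (s:ℝ)^k ≠ 0 := by positivity
          rw [pval, Finset.sum_range_succ, ← pval, ih, hcast k]
          field_simp
          ring
    refine ⟨α, hd, ?_⟩
    have hsum := summable_digits hs α hd
    have hT1 : Tendsto (fun k => pval s k α) atTop (nhds (sval s α)) := by
      have := hsum.hasSum.tendsto_sum_nat
      simpa [pval, sval] using this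
    have hT2 : Tendsto (fun k => pval s k α) atTop (nhds x) := by
      have hbound : ∀ k : ℕ, |pval s k α - x| ≤ ((1:ℝ)/s)^k := by
        intro k
        rw [hpval k]
        have hk : (0:ℝ) < (s:ℝ)^k := by positivity
        have hfl : (a k : ℝ) ≤ x * (s:ℝ)^k := Int.floor_le _
        have hfl2 : x * (s:ℝ)^k < (a k : ℝ) + 1 := Int.lt_floor_add_one _
        rw [abs_le, div_pow, one_pow]
        have e1 : (a k : ℝ)/(s:ℝ)^k ≤ x := by rw [div_le_iff₀ hk]; linarith
        have e2 : x ≤ (a k : ℝ)/(s:ℝ)^k + 1/(s:ℝ)^k := by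
          rw [← add_div, le_div_iff₀ hk]; linarith
        constructor <;> linarith
      have hz : Tendsto (fun k : ℕ => ((1:ℝ)/s)^k) atTop (nhds 0) := by
        apply tendsto_pow_atTop_nhds_zero_of_lt_one (by positivity)
        rw [div_lt_one hsp]; linarith
      have hsq := squeeze_zero (fun k => abs_nonneg _) hbound hz
      rw [tendsto_iff_dist_tendsto_zero]
      simpa [Real.dist_eq] using hsq
    exact tendsto_nhds_unique hT1 hT2

lemma pval_congr {s m : ℕ} {α β : ℕ → ℕ} (h : ∀ i < m, α i = β i) :
    pval s m α = pval s m β := by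
  unfold pval; apply Finset.sum_congr rfl; intro i hi
  rw [h i (Finset.mem_range.1 hi)]

lemma exists_expansion_prefix {s : ℕ} (hs : 1 < s) (m : ℕ) (w : ℕ → ℕ) (hw : isDigits s w)
    {x : ℝ} (hx1 : pval s m w ≤ x) (hx2 : x ≤ pval s m w + ((1:ℝ)/s)^m) :
    ∃ α : ℕ → ℕ, isDigits s α ∧ (∀ i < m, α i = w i) ∧ sval s α = x := by
  have hs1 : (1:ℝ) < (s:ℝ) := by exact_mod_cast hs
  have hsp : (0:ℝ) < (s:ℝ) := by linarith
  have hpk : (0:ℝ) < (s:ℝ)^m := by positivity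
  set t := (x - pval s m w) * (s:ℝ)^m with htdef
  have ht : t ∈ Set.Icc (0:ℝ) 1 := by
    constructor
    · apply mul_nonneg (by linarith) (le_of_lt hpk)
    · have : x - pval s m w ≤ ((1:ℝ)/s)^m := by linarith
      calc t ≤ ((1:ℝ)/s)^m * (s:ℝ)^m := by
            exact mul_le_mul_of_nonneg_right this (le_of_lt hpk)
        _ = 1 := by rw [div_pow, one_pow, div_mul_cancel₀]; positivity
  obtain ⟨δ, hδd, hδv⟩ := exists_expansion hs ht
  refine ⟨fun i => if i < m then w i else δ (i - m), ?_, ?_, ?_⟩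
  · intro n
    by_cases h : n < m <;> simp [h]
    exacts [hw n, hδd (n - m)]
  · intro i hi; simp [hi]
  · set α : ℕ → ℕ := fun i => if i < m then w i else δ (i - m) with hαdef
    have hαd : isDigits s α := by
      intro n
      by_cases h : n < m <;> simp [hαdef, h]
      exacts [hw n, hδd (n - m)]
    rw [sval_split hs α hαd m]
    have h1 : pval s m α = pval s m w := pval_congr (fun i hi => by simp [hαdef, hi])
    have h2 : ∀ n : ℕ, (α (n + m) : ℝ) / (s:ℝ) ^ (n + m + 1)
        = ((1:ℝ)/(s:ℝ)^m) * ((δ n : ℝ) / (s:ℝ)^(n+1)) := by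
      intro n
      have : α (n + m) = δ n := by simp [hαdef]
      rw [this]
      rw [div_mul_div_comm, one_mul, ← pow_add]
      ring_nf
    rw [h1, tsum_congr h2, tsum_mul_left]
    have : ∑' n, (δ n : ℝ) / (s:ℝ)^(n+1) = t := hδv
    rw [this, htdef]
    field_simp
    ring

/-- at every point `x₀` with a unique `s`-adic expansion `c`, if the
expansion of `x` agrees with `c` in the first `m−1` digits then
`|f(x) − f(x₀)| ≤ 2^{−(m−1)}`; consequently `f` is continuous (within `[0,1]`) at `x₀`. -/
theorem f_continuous_at_unary (s : ℕ) (hs : 2 < s) (A0 A1 : Finset ℕ)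
    (hA : A0 ∪ A1 = Finset.range s) (hdisj : Disjoint A0 A1)
    (h0 : A0.Nonempty) (h1 : A1.Nonempty) (f : ℝ → ℝ)
    (hf : ∀ α : ℕ → ℕ, isDigits s α → f (sval s α) = sval 2 (betaSeq A1 α))
    (x₀ : ℝ) (c : ℕ → ℕ) (hc : isDigits s c) (hcx : sval s c = x₀)
    (huniq : ∀ α : ℕ → ℕ, isDigits s α → sval s α = x₀ → α = c) :
    (∀ m : ℕ, 1 ≤ m → ∀ α : ℕ → ℕ, isDigits s α → (∀ i < m - 1, α i = c i) →
      |f (sval s α) - f x₀| ≤ ((1 : ℝ) / 2) ^ (m - 1)) ∧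
    ContinuousWithinAt f (Set.Icc (0 : ℝ) 1) x₀ := by
  have hs1 : 1 < s := by omega
  have partA : ∀ m : ℕ, 1 ≤ m → ∀ α : ℕ → ℕ, isDigits s α → (∀ i < m - 1, α i = c i) →
      |f (sval s α) - f x₀| ≤ ((1 : ℝ) / 2) ^ (m - 1) := by
    intro m hm α hα hagree
    rw [hf α hα, ← hcx, hf c hc]
    exact part1 hs A1 hα hc (m-1) hagree
  refine ⟨partA, ?_⟩
  rw [Metric.continuousWithinAt_iff]
  intro ε hε
  obtain ⟨m, hmε⟩ := exists_pow_lt_of_lt_one hε (by norm_num : (1:ℝ)/2 < 1)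
  -- the bad set
  classical
  set ext : (Fin m → Fin s) → (ℕ → ℕ) := fun w i => if h : i < m then (w ⟨i, h⟩ : ℕ) else 0
    with hext
  have hextd : ∀ w, isDigits s (ext w) := by
    intro w n
    by_cases h : n < m
    · simpa [hext, h] using (w ⟨n, h⟩).2
    · simp only [hext, dif_neg h]; omega
  set B : Set ℝ := ⋃ w : {w : Fin m → Fin s // ¬ ∀ i : Fin m, (w i : ℕ) = c i},
      Set.Icc (pval s m (ext w.1)) (pval s m (ext w.1) + ((1:ℝ)/s)^m) with hB
  have hBclosed : IsClosed B := isClosed_iUnion_of_finite (fun _ => isClosed_Icc)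
  have hx₀B : x₀ ∉ B := by
    intro hx
    rw [hB, Set.mem_iUnion] at hx
    obtain ⟨⟨w, hw⟩, hmem⟩ := hx
    obtain ⟨α, hαd, hαpre, hαv⟩ := exists_expansion_prefix hs1 m (ext w) (hextd w)
      hmem.1 hmem.2
    have := huniq α hαd hαv
    apply hw
    intro i
    have h1 : α i = ext w i := hαpre i i.2
    rw [this] at h1
    simpa [hext, i.2] using h1.symm
  obtain ⟨δ, hδ0, hδball⟩ := Metric.isOpen_iff.1 hBclosed.isOpen_compl x₀ hx₀B
  refine ⟨δ, hδ0, ?_⟩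
  intro x hx hdist
  obtain ⟨α, hαd, hαv⟩ := exists_expansion hs1 hx
  have hagree : ∀ i < m, α i = c i := by
    by_contra hcon
    push_neg at hcon
    obtain ⟨i, hi, hne⟩ := hcon
    set w : Fin m → Fin s := fun j => ⟨α j, hαd j⟩ with hwdef
    have hw : ¬ ∀ j : Fin m, (w j : ℕ) = c j := by
      intro hall
      exact hne (hall ⟨i, hi⟩)
    have hxB : x ∈ B := by
      rw [hB, Set.mem_iUnion]
      refine ⟨⟨w, hw⟩, ?_⟩
      have hpe : pval s m (ext w) = pval s m α :=
        pval_congr (fun j hj => by simp [hext, hj, hwdef])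
      rw [Set.mem_Icc, hpe, ← hαv]
      exact ⟨pval_le_sval hs1 α hαd m, sval_le_pval hs1 α hαd m⟩
    have : x ∈ Metric.ball x₀ δ := by rwa [Metric.mem_ball]
    exact hδball this hxB
  rw [Real.dist_eq, ← hαv]
  calc |f (sval s α) - f x₀| ≤ ((1:ℝ)/2)^((m+1)-1) := by
        apply partA (m+1) (by omega) α hαd
        simpa using hagree
    _ < ε := by simpa using hmε
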